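/- Let H be a monoid such that the reduced quotient H_red = H/H^× is finitely generated and H ≠ H^×. Then there exists an atom b ∈ A(H) such that lim_{n→∞} ρ(b^n) = inf R̄(H); in particular, inf R̄(H) = min{lim_{n→∞} ρ(u^n) : u ∈ A(H)} and the infimum of R̄(H) is attained. -/

import Mathlib

open Filter Topology

/-- The set of factorization lengths of `a`: the set of all `k` such that `a` is a
product of `k` atoms (irreducibles); by convention it is `{0}` for units. -/
noncomputable def lengthSet (H : Type*) [CommMonoid H] (a : H) : Set ℕ :=
  open Classical in
  if IsUnit a then {0}
  else {k | ∃ f : Fin k → H, (∀ i, Irreducible (f i)) ∧ a = ∏ i, f i}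

/-- The elasticity `ρ(a) = max L(a) / min L(a)` of an element of a BF-monoid,
with `ρ(a) = 1` for units. -/
noncomputable def elasticity (H : Type*) [CommMonoid H] (a : H) : ℝ :=
  open Classical in
  if IsUnit a then 1
  else ((sSup (lengthSet H a) : ℕ) : ℝ) / ((sInf (lengthSet H a) : ℕ) : ℝ)

/-- The elasticity `ρ(H) = sup {ρ(a) : a ∈ H} ∈ ℝ≥1 ∪ {∞}` of the monoid `H`. -/
noncomputable def monoidElasticity (H : Type*) [CommMonoid H] : EReal :=
  ⨆ a : H, ((elasticity H a : ℝ) : EReal)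

/-- The set `R̄(H)` of asymptotic elasticities `ρ̄(a) = lim_{n → ∞} ρ(aⁿ)`
of nonunits `a ∈ H` (membership requires the limit to exist). -/
def asympSet (H : Type*) [CommMonoid H] : Set EReal :=
  {r | ∃ a : H, ¬ IsUnit a ∧
    Tendsto (fun n : ℕ => ((elasticity H (a ^ n) : ℝ) : EReal)) atTop (nhds r)}

/-- `H` is locally finitely generated: for every `a ∈ H` there are only finitely many
atoms, up to associates, dividing some power of `a`. -/
def LocallyFinitelyGenerated (H : Type*) [CommMonoid H] : Prop :=
  ∀ a : H, {u : Associates H | Irreducible u ∧ ∃ n : ℕ, u ∣ Associates.mk (a ^ n)}.Finite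

/-- `H` is a BF-monoid: atomic (every nonunit has a factorization into atoms) and
all sets of lengths are finite. -/
def IsBFMonoid (H : Type*) [CommMonoid H] : Prop :=
  (∀ a : H, ¬ IsUnit a → (lengthSet H a).Nonempty) ∧ ∀ a : H, (lengthSet H a).Finite

/-- `(k, ℓ) ≠ (0,0)` is a nice pair with respect to `(a, b)` if
`max L((aᵏbˡ)ᵗ) = t · max L(aᵏbˡ)` and `min L((aᵏbˡ)ᵗ) = t · min L(aᵏbˡ)` for all `t ∈ ℕ`. -/
def IsNicePair (H : Type*) [CommMonoid H] (a b : H) (k ℓ : ℕ) : Prop :=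
  ¬ (k = 0 ∧ ℓ = 0) ∧ ∀ t : ℕ, 0 < t →
    sSup (lengthSet H ((a ^ k * b ^ ℓ) ^ t)) = t * sSup (lengthSet H (a ^ k * b ^ ℓ)) ∧
    sInf (lengthSet H ((a ^ k * b ^ ℓ) ^ t)) = t * sInf (lengthSet H (a ^ k * b ^ ℓ))

/-- `H` is strongly primary: `H ≠ H^×` and for every nonunit `a` there is `n ∈ ℕ`
such that every product of `n` nonunits of `H` is divisible by `a`. -/
def StronglyPrimary (H : Type*) [CommMonoid H] : Prop :=
  (∃ a : H, ¬ IsUnit a) ∧ ∀ a : H, ¬ IsUnit a → ∃ n : ℕ, 0 < n ∧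
    ∀ f : Fin n → H, (∀ i, ¬ IsUnit (f i)) → a ∣ ∏ i, f i

/-- `H` is half-factorial: atomic and `|L(a)| = 1` for every `a ∈ H`. -/
def IsHalfFactorial (H : Type*) [CommMonoid H] : Prop :=
  ∀ a : H, ∃ k : ℕ, lengthSet H a = {k}




lemma qsolve {n m : Type*} [Fintype n] [Fintype m] [DecidableEq n] [DecidableEq m]
    (A : m → n → ℚ) (b : m → ℚ) (x : n → ℝ)
    (hx : ∀ j, ∑ i, (A j i : ℝ) * x i = (b j : ℝ)) :
    ∃ y : n → ℚ, ∀ j, ∑ i, A j i * y i = b j := by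
  by_contra h
  push_neg at h
  let F : (n → ℚ) →ₗ[ℚ] (m → ℚ) :=
    { toFun := fun y j => ∑ i, A j i * y i
      map_add' := by
        intro y z; funext j
        simp [mul_add, Finset.sum_add_distrib]
      map_smul' := by
        intro c y; funext j
        simp only [RingHom.id_apply, Pi.smul_apply, smul_eq_mul, Finset.mul_sum]
        congr 1; funext i; ring }
  have hb : b ∉ LinearMap.range F := by
    rintro ⟨y, hy⟩
    obtain ⟨j, hj⟩ := h y
    exact hj (by rw [← hy]; rfl)
  set U := LinearMap.range F with hUdef
  have h1 : Submodule.Quotient.mk (p := U) b ≠ 0 := by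
    rwa [ne_eq, Submodule.Quotient.mk_eq_zero]
  obtain ⟨φ₀, hφ₀⟩ : ∃ φ₀ : Module.Dual ℚ ((m → ℚ) ⧸ U), φ₀ (Submodule.Quotient.mk b) ≠ 0 := by
    by_contra hc; push_neg at hc
    exact h1 ((Module.forall_dual_apply_eq_zero_iff ℚ _).mp hc)
  set ψ : Module.Dual ℚ (m → ℚ) := φ₀.comp U.mkQ with hψdef
  have hU : ∀ u ∈ U, ψ u = 0 := by
    intro u hu
    have : U.mkQ u = 0 := by
      rw [Submodule.mkQ_apply, Submodule.Quotient.mk_eq_zero]; exact hu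
    simp [hψdef, LinearMap.comp_apply, this]
  have hψb : ψ b ≠ 0 := by
    simpa [hψdef, LinearMap.comp_apply, Submodule.mkQ_apply] using hφ₀
  set d : m → ℚ := fun j => ψ (fun j' => if j = j' then 1 else 0) with hddef
  have hrep : ∀ z : m → ℚ, ψ z = ∑ j, z j * d j := by
    intro z
    conv_lhs => rw [pi_eq_sum_univ z]
    rw [map_sum]
    refine Finset.sum_congr rfl fun j _ => ?_
    rw [map_smul]; simp [hddef]
  have hcol : ∀ i : n, ψ (fun j => A j i) = 0 := by
    intro i
    apply hU
    refine ⟨fun i' => if i = i' then 1 else 0, ?_⟩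
    funext j
    show (∑ i', A j i' * if i = i' then 1 else 0) = A j i
    simp [mul_ite, Finset.sum_ite_eq]
  have key : ((ψ b : ℚ) : ℝ) = 0 := by
    have e1 : ((ψ b : ℚ) : ℝ) = ∑ j, (b j : ℝ) * (d j : ℝ) := by
      rw [hrep b]; push_cast; rfl
    have e2 : ∀ j : m, (b j : ℝ) * (d j : ℝ) = (∑ i, (A j i : ℝ) * x i) * (d j : ℝ) := by
      intro j; rw [hx j]
    have e3 : ∑ j, (∑ i, (A j i : ℝ) * x i) * (d j : ℝ)
        = ∑ i, x i * ∑ j, (A j i : ℝ) * (d j : ℝ) := by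
      simp_rw [Finset.sum_mul, Finset.mul_sum]
      rw [Finset.sum_comm]
      refine Finset.sum_congr rfl fun i _ => Finset.sum_congr rfl fun j _ => by ring
    have e4 : ∀ i : n, ∑ j, (A j i : ℝ) * (d j : ℝ) = 0 := by
      intro i
      have := hcol i
      rw [hrep] at this
      have : ((∑ j, A j i * d j : ℚ) : ℝ) = 0 := by rw [this]; norm_num
      rw [← this]; push_cast; rfl
    rw [e1, Finset.sum_congr rfl fun j _ => e2 j, e3]
    simp [e4]
  exact hψb (by exact_mod_cast key)


lemma ratCoeffs {k : ℕ} (col : Fin k → (Fin k → ℚ)) (I : Finset (Fin k))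
    (h0 : (0 : Fin k → ℝ) ∈ convexHull ℝ ((fun i => fun j => ((col i j : ℝ))) '' (I : Set (Fin k)))) :
    ∃ c : Fin k → ℚ, (∀ i, 0 ≤ c i) ∧ (∀ i, c i ≠ 0 → i ∈ I) ∧ (∃ i ∈ I, 0 < c i) ∧
      (∀ j, ∑ i, c i * col i j = 0) := by
  classical
  rw [convexHull_eq_union] at h0
  simp only [Set.mem_iUnion] at h0
  obtain ⟨t, hts, hai, hmem⟩ := h0
  rw [Finset.convexHull_eq] at hmem
  obtain ⟨w, hw0, hw1, hwc⟩ := hmem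
  rw [Finset.centerMass_eq_of_sum_1 _ _ hw1] at hwc
  have hsel : ∀ y : {y // y ∈ t}, ∃ i, i ∈ I ∧ (fun j => ((col i j : ℝ))) = (y : Fin k → ℝ) := by
    intro y
    have := hts y.2
    obtain ⟨i, hiI, hieq⟩ := this
    exact ⟨i, hiI, hieq⟩
  choose sel hselI hseleq using hsel
  -- real solution of the linear system
  have hx : ∀ j : Sum (Fin k) Unit,
      ∑ y : {y // y ∈ t}, ((Sum.elim (fun j (y : {y // y ∈ t}) => col (sel y) j)
        (fun _ _ => (1:ℚ)) j y : ℚ) : ℝ) * w (y : Fin k → ℝ)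
      = ((Sum.elim (fun _ => (0:ℚ)) (fun _ => (1:ℚ)) j : ℚ) : ℝ) := by
    rintro (j | u)
    · have h1 : ∑ x ∈ t, w x * x j = 0 := by
        have h2 := congrFun hwc j
        rw [Finset.sum_apply] at h2
        simpa using h2
      simp only [Sum.elim_inl, Rat.cast_zero]
      calc ∑ y : {y // y ∈ t}, ((col (sel y) j : ℚ) : ℝ) * w (y : Fin k → ℝ)
          = ∑ y : {y // y ∈ t}, w (y : Fin k → ℝ) * ((y : Fin k → ℝ) j) := by
            refine Finset.sum_congr rfl fun y _ => ?_
            rw [← congrFun (hseleq y) j]; ring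
        _ = ∑ x ∈ t, w x * x j := Finset.sum_coe_sort t (fun x => w x * x j)
        _ = 0 := h1
    · simp only [Sum.elim_inr, Rat.cast_one, one_mul]
      rw [Finset.sum_coe_sort t w]
      exact hw1
  obtain ⟨y₀, hy₀⟩ := qsolve _ _ _ hx
  -- uniqueness via affine independence: cast y₀ = w ∘ val
  have hai' : AffineIndependent ℝ (fun y : {y // y ∈ t} => (y : Fin k → ℝ)) := hai
  set z : {y // y ∈ t} → ℝ := fun y => ((y₀ y : ℚ) : ℝ) - w y with hzdef
  have hzsum : ∑ y : {y // y ∈ t}, z y = 0 := by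
    have r1 : ((∑ y : {y // y ∈ t}, y₀ y : ℚ) : ℝ) = 1 := by
      have := hy₀ (Sum.inr ())
      simp only [Sum.elim_inr] at this
      rw [show (∑ y : {y // y ∈ t}, y₀ y) = (1:ℚ) by rw [← this]; simp [mul_comm]]
      norm_num
    have r2 : ∑ y : {y // y ∈ t}, w (y : Fin k → ℝ) = 1 := by
      rw [Finset.sum_coe_sort t w]; exact hw1
    push_cast at r1
    simp only [hzdef]
    rw [Finset.sum_sub_distrib, r1, r2, sub_self]
  have hzcomb : ∑ y : {y // y ∈ t}, z y • (y : Fin k → ℝ) = 0 := by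
    funext j
    rw [Finset.sum_apply]
    have hq : ∑ y : {y // y ∈ t}, ((y₀ y : ℚ) : ℝ) * ((y : Fin k → ℝ) j) = 0 := by
      have := hy₀ (Sum.inl j)
      simp only [Sum.elim_inl] at this
      have hcast : ((∑ y : {y // y ∈ t}, col (sel y) j * y₀ y : ℚ) : ℝ) = 0 := by
        rw [this]; norm_num
      push_cast at hcast
      rw [← hcast]
      refine Finset.sum_congr rfl fun y _ => ?_
      have := congrFun (hseleq y) j
      rw [← this]; ring
    have hr : ∑ y : {y // y ∈ t}, w (y : Fin k → ℝ) * ((y : Fin k → ℝ) j) = 0 := by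
      have h2 := congrFun hwc j
      rw [Finset.sum_apply] at h2
      rw [Finset.sum_coe_sort t (fun x => w x * x j)]
      simpa using h2
    simp only [hzdef, Pi.smul_apply, smul_eq_mul, sub_mul, Pi.zero_apply]
    rw [Finset.sum_sub_distrib, hq, hr, sub_self]
  have hz0 : ∀ y : {y // y ∈ t}, z y = 0 := by
    intro y
    exact affineIndependent_iff.mp hai' Finset.univ z (by simpa using hzsum)
      (by simpa using hzcomb) y (Finset.mem_univ y)
  have hy₀w : ∀ y : {y // y ∈ t}, ((y₀ y : ℚ) : ℝ) = w (y : Fin k → ℝ) := by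
    intro y; have := hz0 y; simp only [hzdef] at this; linarith
  -- assemble c
  set c : Fin k → ℚ := fun i => ∑ y : {y // y ∈ t}, if sel y = i then y₀ y else 0 with hcdef
  have hy₀nn : ∀ y : {y // y ∈ t}, 0 ≤ y₀ y := by
    intro y
    have : (0:ℝ) ≤ ((y₀ y : ℚ) : ℝ) := by rw [hy₀w y]; exact hw0 _ y.2
    exact_mod_cast this
  have hcnn : ∀ i, 0 ≤ c i := by
    intro i
    exact Finset.sum_nonneg fun y _ => by by_cases h : sel y = i <;> simp [h, hy₀nn y]
  have hcsupp : ∀ i, c i ≠ 0 → i ∈ I := by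
    intro i hci
    obtain ⟨y, -, hy⟩ := Finset.exists_ne_zero_of_sum_ne_zero hci
    by_cases h : sel y = i
    · rw [← h]; exact hselI y
    · simp [h] at hy
  have hcsum : ∑ i, c i = 1 := by
    simp only [hcdef]
    rw [Finset.sum_comm]
    have : ∀ y : {y // y ∈ t}, ∑ i, (if sel y = i then y₀ y else 0) = y₀ y := by
      intro y; rw [Finset.sum_ite_eq]; simp
    rw [Finset.sum_congr rfl fun y _ => this y]
    have := hy₀ (Sum.inr ())
    simp only [Sum.elim_inr] at this
    rw [← this]; simp [mul_comm]
  have hpos : ∃ i ∈ I, 0 < c i := by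
    have : ∃ i ∈ Finset.univ, c i ≠ 0 := by
      obtain ⟨i, hi1, hi2⟩ := Finset.exists_ne_zero_of_sum_ne_zero (by rw [hcsum]; norm_num :
        ∑ i, c i ≠ 0)
      exact ⟨i, hi1, hi2⟩
    obtain ⟨i, -, hi⟩ := this
    exact ⟨i, hcsupp i hi, lt_of_le_of_ne (hcnn i) (Ne.symm hi)⟩
  refine ⟨c, hcnn, hcsupp, hpos, ?_⟩
  intro j
  simp only [hcdef, Finset.sum_mul]
  rw [Finset.sum_comm]
  have : ∀ y : {y // y ∈ t}, ∑ i, (if sel y = i then y₀ y else 0) * col i j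
      = y₀ y * col (sel y) j := by
    intro y
    rw [Finset.sum_congr rfl (fun i _ => by rw [ite_mul, zero_mul] : ∀ i ∈ Finset.univ,
      (if sel y = i then y₀ y else 0) * col i j = if sel y = i then y₀ y * col i j else 0)]
    rw [Finset.sum_ite_eq]; simp
  rw [Finset.sum_congr rfl fun y _ => this y]
  have := hy₀ (Sum.inl j)
  simp only [Sum.elim_inl] at this
  rw [← this]
  exact Finset.sum_congr rfl fun y _ => by ring


section Aux1
variable {H : Type*} [CancelCommMonoid H]

lemma associates_cancel {x y z : Associates H} (h : x * y = x * z) : y = z := by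
  obtain ⟨a, rfl⟩ := Associates.mk_surjective x
  obtain ⟨b, rfl⟩ := Associates.mk_surjective y
  obtain ⟨c, rfl⟩ := Associates.mk_surjective z
  rw [Associates.mk_mul_mk, Associates.mk_mul_mk, Associates.mk_eq_mk_iff_associated] at h
  rw [Associates.mk_eq_mk_iff_associated]
  obtain ⟨u, hu⟩ := h
  exact ⟨u, mul_left_cancel (a := a) (by rw [← mul_assoc]; exact hu)⟩

lemma irreducible_mk_iff {a : H} : Irreducible (Associates.mk a) ↔ Irreducible a := by
  constructor
  · intro h
    refine ⟨fun hu => h.not_isUnit (Associates.isUnit_mk.mpr hu), fun b c hbc => ?_⟩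
    have : Associates.mk a = Associates.mk b * Associates.mk c := by
      rw [Associates.mk_mul_mk, hbc]
    rcases h.isUnit_or_isUnit this with h' | h'
    · exact Or.inl (Associates.isUnit_mk.mp h')
    · exact Or.inr (Associates.isUnit_mk.mp h')
  · intro h
    refine ⟨fun hu => h.not_isUnit (Associates.isUnit_mk.mp hu), fun x y hxy => ?_⟩
    obtain ⟨b, rfl⟩ := Associates.mk_surjective x
    obtain ⟨c, rfl⟩ := Associates.mk_surjective y
    rw [Associates.mk_mul_mk, Associates.mk_eq_mk_iff_associated] at hxy
    obtain ⟨u, hu⟩ := hxy.symm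
    rcases h.isUnit_or_isUnit (show a = b * (c * u) by rw [← mul_assoc, hu]) with h' | h'
    · exact Or.inl (Associates.isUnit_mk.mpr h')
    · exact Or.inr (Associates.isUnit_mk.mpr (isUnit_of_mul_isUnit_left h'))

set_option maxHeartbeats 1000000 in
lemma exists_phi (hfg : Monoid.FG (Associates H)) (hne : ∃ a : H, ¬ IsUnit a) :
    ∃ (φ : H → ℝ) (δ₀ Δ : ℝ), 0 < δ₀ ∧
      (∀ x y : H, φ (x*y) = φ x + φ y) ∧
      (∀ x : H, IsUnit x → φ x = 0) ∧
      (∀ x : H, ¬ IsUnit x → δ₀ ≤ φ x) ∧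
      (∀ x : H, Irreducible x → φ x ≤ Δ) ∧
      ({u : Associates H | Irreducible u}.Finite) := by
  classical
  obtain ⟨T₀, hT₀⟩ := Monoid.fg_def.mp hfg
  set T : Finset (Associates H) := insert 1 T₀ with hT
  have hTcl : Submonoid.closure (T : Set (Associates H)) = ⊤ := by
    apply top_unique
    rw [← hT₀]
    exact Submonoid.closure_mono (fun x hx => Finset.mem_insert_of_mem hx)
  set k := T.card with hk
  set g : Fin k → Associates H := fun i => ((T.equivFin.symm i : T) : Associates H) with hg
  have hgT : ∀ i, g i ∈ T := fun i => (T.equivFin.symm i).2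
  have hgsurj : ∀ x ∈ T, ∃ i, g i = x := by
    intro x hx
    exact ⟨T.equivFin ⟨x, hx⟩, by simp [hg]⟩
  set π : (Fin k → ℕ) → Associates H := fun v => ∏ i, g i ^ v i with hπ
  have hπadd : ∀ v w, π (v + w) = π v * π w := by
    intro v w
    simp [hπ, pow_add, Finset.prod_mul_distrib]
  have hπzero : π 0 = 1 := by simp [hπ]
  set en : Fin k → (Fin k → ℕ) := fun i j => if i = j then 1 else 0 with hen
  have hπen : ∀ i, π (en i) = g i := by
    intro i
    have h1 : ∀ j, g j ^ en i j = if i = j then g j else 1 := fun j => by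
      by_cases h : i = j <;> simp [hen, h]
    calc π (en i) = ∏ j, if i = j then g j else 1 := Finset.prod_congr rfl fun j _ => h1 j
      _ = g i := by simp [Finset.prod_ite_eq]
  have hπsurj : ∀ x : Associates H, ∃ v, π v = x := by
    intro x
    have hx : x ∈ Submonoid.closure (T : Set (Associates H)) := by
      rw [hTcl]; exact Submonoid.mem_top x
    induction hx using Submonoid.closure_induction with
    | mem t ht =>
      obtain ⟨i, hi⟩ := hgsurj t ht
      exact ⟨en i, by rw [hπen, hi]⟩
    | one => exact ⟨0, hπzero⟩
    | mul x y hx hy ihx ihy =>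
      obtain ⟨v, hv⟩ := ihx
      obtain ⟨w, hw⟩ := ihy
      exact ⟨v + w, by rw [hπadd, hv, hw]⟩
  set nq : (Fin k → ℕ) → (Fin k → ℚ) := fun v j => (v j : ℚ) with hnq
  set RR : Set (Fin k → ℚ) :=
    {x | ∃ p q : Fin k → ℕ, (∀ i, x i = (p i : ℚ) - (q i : ℚ)) ∧ π p = π q} with hRR
  set Vq : Submodule ℚ (Fin k → ℚ) := Submodule.span ℚ RR with hVq
  -- key positivity obstruction
  have key0 : ∀ v : Fin k → ℚ, v ∈ Vq → (∀ i, 0 ≤ v i) → ∀ j, 0 < v j → g j = 1 := by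
    intro v hv hvnn j hvj
    -- clear denominators
    have hG : ∃ N : ℕ, 0 < N ∧ (N : ℚ) • v ∈ AddSubgroup.closure RR := by
      clear hvnn hvj
      induction hv using Submodule.span_induction with
      | mem x hx => exact ⟨1, one_pos, by simpa using AddSubgroup.subset_closure hx⟩
      | zero => exact ⟨1, one_pos, by simpa using AddSubgroup.zero_mem (AddSubgroup.closure RR)⟩
      | add x y hx hy ihx ihy =>
        obtain ⟨N, hN, hNx⟩ := ihx
        obtain ⟨M, hM, hMy⟩ := ihy
        refine ⟨N * M, Nat.mul_pos hN hM, ?_⟩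
        have e1 : ((N * M : ℕ) : ℚ) • (x + y) = M • ((N:ℚ) • x) + N • ((M:ℚ) • y) := by
          push_cast
          rw [smul_add]
          rw [← Nat.cast_smul_eq_nsmul ℚ M ((N:ℚ) • x), ← Nat.cast_smul_eq_nsmul ℚ N ((M:ℚ) • y)]
          rw [smul_smul, smul_smul]
          ring_nf
        rw [e1]
        exact AddSubgroup.add_mem _ (AddSubgroup.nsmul_mem _ hNx M)
          (AddSubgroup.nsmul_mem _ hMy N)
      | smul c x hx ih =>
        obtain ⟨N, hN, hNx⟩ := ih
        refine ⟨N * c.den, Nat.mul_pos hN c.pos, ?_⟩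
        have hden : (c.den : ℚ) * c = (c.num : ℚ) := by
          have hne : (c.den : ℚ) ≠ 0 := by exact_mod_cast c.den_nz
          have h := Rat.num_div_den c
          have h2 := congrArg (fun t : ℚ => t * (c.den : ℚ)) h
          rw [div_mul_cancel₀ _ hne] at h2
          rw [mul_comm]
          exact h2.symm
        have e1 : ((N * c.den : ℕ) : ℚ) • (c • x) = c.num • ((N:ℚ) • x) := by
          rw [← Int.cast_smul_eq_zsmul ℚ c.num ((N:ℚ) • x)]
          rw [smul_smul, smul_smul]
          congr 1
          push_cast
          calc (N : ℚ) * (c.den : ℚ) * c = (N : ℚ) * ((c.den : ℚ) * c) := by ring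
            _ = (c.num : ℚ) * (N : ℚ) := by rw [hden]; ring
        rw [e1]
        exact AddSubgroup.zsmul_mem _ hNx c.num
    obtain ⟨N, hN, hNv⟩ := hG
    -- closure of RR is RR
    have hRRadd : ∀ x ∈ AddSubgroup.closure RR, x ∈ RR := by
      intro x hx
      induction hx using AddSubgroup.closure_induction with
      | mem x hx => exact hx
      | zero => exact ⟨0, 0, fun i => by simp, rfl⟩
      | add x y hx hy ihx ihy =>
        obtain ⟨p₁, q₁, he₁, hπ₁⟩ := ihx
        obtain ⟨p₂, q₂, he₂, hπ₂⟩ := ihy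
        refine ⟨p₁ + p₂, q₁ + q₂, fun i => ?_, by rw [hπadd, hπadd, hπ₁, hπ₂]⟩
        have := he₁ i; have := he₂ i
        simp only [Pi.add_apply]
        push_cast
        rw [he₁ i, he₂ i]; ring
      | neg x hx ih =>
        obtain ⟨p₁, q₁, he₁, hπ₁⟩ := ih
        exact ⟨q₁, p₁, fun i => by simp [he₁ i], hπ₁.symm⟩
    obtain ⟨p, q, he, hπpq⟩ := hRRadd _ hNv
    have hqp : ∀ i, q i ≤ p i := by
      intro i
      have h1 : (0:ℚ) ≤ (N:ℚ) * v i := mul_nonneg (by positivity) (hvnn i)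
      have h2 : ((N:ℚ) • v) i = (p i : ℚ) - q i := he i
      rw [Pi.smul_apply, smul_eq_mul] at h2
      have : (q i : ℚ) ≤ (p i : ℚ) := by linarith
      exact_mod_cast this
    set w : Fin k → ℕ := fun i => p i - q i with hw
    have hwq : w + q = p := by
      funext i
      simp only [Pi.add_apply, hw]
      exact Nat.sub_add_cancel (hqp i)
    have hπw : π w = 1 := by
      have h1 : π q * π w = π q * 1 := by
        rw [mul_one, mul_comm, ← hπadd, hwq, hπpq]
      exact associates_cancel h1
    have hwj : w j ≠ 0 := by
      have h2 : ((N:ℚ) • v) j = (p j : ℚ) - q j := he j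
      rw [Pi.smul_apply, smul_eq_mul] at h2
      have h3 : (0:ℚ) < (N:ℚ) * v j := mul_pos (by exact_mod_cast hN) hvj
      have h4 : (q j : ℚ) < (p j : ℚ) := by linarith
      have h5 : q j < p j := by exact_mod_cast h4
      simp only [hw]
      omega
    have hgu : IsUnit (g j ^ w j) := by
      have hπw' : ∏ i, g i ^ w i = 1 := hπw
      rw [← Finset.mul_prod_erase Finset.univ (fun i => g i ^ w i) (Finset.mem_univ j)] at hπw'
      exact IsUnit.of_mul_eq_one _ hπw'
    rw [isUnit_pow_iff hwj] at hgu
    exact (Associates.isUnit_iff_eq_one _).mp hgu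
  -- complement and projection
  obtain ⟨Wq, hWq⟩ := Submodule.exists_isCompl Vq
  set pr : (Fin k → ℚ) →ₗ[ℚ] (Fin k → ℚ) :=
    Wq.subtype.comp (Wq.linearProjOfIsCompl Vq hWq.symm) with hpr
  have hprV : ∀ x ∈ Vq, pr x = 0 := by
    intro x hx
    have h1 : (Wq.linearProjOfIsCompl Vq hWq.symm) x = 0 :=
      Submodule.linearProjOfIsCompl_apply_right' hWq.symm hx
    simp only [hpr, LinearMap.comp_apply, h1, map_zero]
  have hprker : ∀ x, pr x = 0 → x ∈ Vq := by
    intro x hx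
    simp only [hpr, LinearMap.comp_apply] at hx
    have : (Wq.linearProjOfIsCompl Vq hWq.symm) x = 0 := by
      apply Subtype.ext_iff.mpr
      simpa using hx
    exact (Submodule.linearProjOfIsCompl_apply_eq_zero_iff hWq.symm).mp this
  set e : Fin k → (Fin k → ℚ) := fun i j => if i = j then 1 else 0 with he
  set col : Fin k → (Fin k → ℚ) := fun i => pr (e i) with hcol
  set I : Finset (Fin k) := Finset.univ.filter (fun i => g i ≠ 1) with hI
  -- 0 not in convex hull
  have h0K : (0 : Fin k → ℝ) ∉
      convexHull ℝ ((fun i => fun j => ((col i j : ℝ))) '' (I : Set (Fin k))) := by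
    intro h0
    obtain ⟨c, hcnn, hcsupp, ⟨i₀, hi₀I, hi₀pos⟩, hceq⟩ := ratCoeffs col I h0
    have hprc : pr c = 0 := by
      have e1 : c = ∑ i, c i • e i := by
        conv_lhs => rw [pi_eq_sum_univ c]
      rw [e1, map_sum]
      funext j
      rw [Finset.sum_apply]
      have : ∀ i, (pr (c i • e i)) j = c i * col i j := by
        intro i
        rw [map_smul]
        simp [hcol]
      rw [Finset.sum_congr rfl fun i _ => this i]
      exact hceq j
    have hcV : c ∈ Vq := hprker c hprc
    have := key0 c hcV (fun i => hcnn i) i₀ hi₀pos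
    rw [hI] at hi₀I
    simp only [Finset.mem_filter] at hi₀I
    exact hi₀I.2 this
  -- separation
  obtain ⟨f, u, hfu, hfK⟩ := geometric_hahn_banach_point_closed
    (convex_convexHull ℝ _)
    (Set.Finite.isClosed_convexHull (𝕜 := ℝ) (((I : Set (Fin k)).toFinite).image _)) h0K
  have hu : 0 < u := by simpa using hfu
  choose rep hrep using hπsurj
  set cst : (Fin k → ℚ) → (Fin k → ℝ) := fun v j => ((v j : ℚ) : ℝ) with hcst
  set φS : Associates H → ℝ := fun x => f (cst (pr (nq (rep x)))) with hφS
  have hπRR : ∀ p q, π p = π q → pr (nq p) = pr (nq q) := by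
    intro p q h
    have hmem : nq p - nq q ∈ RR := ⟨p, q, fun i => by simp [hnq], h⟩
    have := hprV _ (Submodule.subset_span hmem)
    rw [map_sub, sub_eq_zero] at this
    exact this
  have hφSπ : ∀ v : Fin k → ℕ, φS (π v) = f (cst (pr (nq v))) := by
    intro v
    rw [hφS]
    exact congrArg f (congrArg cst (hπRR _ _ (hrep (π v))))
  have hcstadd : ∀ a b : Fin k → ℚ, cst (a + b) = cst a + cst b := by
    intro a b; funext j; simp [hcst]
  have hnqadd : ∀ a b : Fin k → ℕ, nq (a + b) = nq a + nq b := by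
    intro a b; funext j; simp [hnq]
  have hφSmul : ∀ x y, φS (x * y) = φS x + φS y := by
    intro x y
    have h1 : π (rep (x * y)) = π (rep x + rep y) := by
      rw [hπadd, hrep, hrep, hrep]
    calc φS (x * y) = f (cst (pr (nq (rep (x * y))))) := rfl
      _ = f (cst (pr (nq (rep x + rep y)))) := by rw [hπRR _ _ h1]
      _ = f (cst (pr (nq (rep x)) + pr (nq (rep y)))) := by rw [hnqadd, map_add]
      _ = f (cst (pr (nq (rep x))) + cst (pr (nq (rep y)))) := by rw [hcstadd]
      _ = φS x + φS y := by rw [map_add]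
  have hφS1 : φS (1 : Associates H) = 0 := by
    have h1 : π (rep (1 : Associates H)) = π 0 := by rw [hrep, hπzero]
    have h2 : pr (nq (rep (1 : Associates H))) = pr (nq 0) := hπRR _ _ h1
    show f (cst (pr (nq (rep (1 : Associates H))))) = 0
    rw [h2]
    have h3 : nq 0 = 0 := by funext j; simp [hnq]
    rw [h3, map_zero]
    have h4 : cst 0 = 0 := by funext j; simp [hcst]
    rw [h4, map_zero]
  have hφSg : ∀ i, φS (g i) = f (fun j => ((col i j : ℚ) : ℝ)) := by
    intro i
    rw [← hπen i, hφSπ]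
    have : nq (en i) = e i := by
      funext j
      by_cases h : i = j <;> simp [hnq, hen, he, h]
    rw [this]
  have hφSpos : ∀ i ∈ I, 0 < φS (g i) := by
    intro i hi
    rw [hφSg]
    refine lt_trans hu (hfK _ ?_)
    exact subset_convexHull ℝ _ (Set.mem_image_of_mem _ (by exact_mod_cast hi))
  -- I is nonempty
  have hInon : I.Nonempty := by
    obtain ⟨a, ha⟩ := hne
    have hmk : Associates.mk a ≠ 1 := fun h => ha (Associates.mk_eq_one.mp h)
    by_contra hIe
    rw [Finset.not_nonempty_iff_eq_empty] at hIe
    have hall : ∀ i, g i = 1 := by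
      intro i
      by_contra hgi
      have : i ∈ I := by rw [hI]; simp [hgi]
      rw [hIe] at this
      exact absurd this (Finset.notMem_empty i)
    apply hmk
    rw [← hrep (Associates.mk a), hπ]
    simp [hall]
  set δ₀ : ℝ := (I.image (fun i => φS (g i))).min' (hInon.image _) with hδ₀
  have hδpos : 0 < δ₀ := by
    have := Finset.min'_mem (I.image (fun i => φS (g i))) (hInon.image _)
    rw [← hδ₀] at this
    obtain ⟨i, hiI, hieq⟩ := Finset.mem_image.mp this
    rw [← hieq]
    exact hφSpos i hiI
  have hδle : ∀ i ∈ I, δ₀ ≤ φS (g i) := by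
    intro i hi
    exact Finset.min'_le _ _ (Finset.mem_image_of_mem _ hi)
  -- lower bound on nonunits
  have hlow : ∀ x : Associates H, 0 ≤ φS x ∧ (x ≠ 1 → δ₀ ≤ φS x) := by
    intro x
    have hx : x ∈ Submonoid.closure (T : Set (Associates H)) := by
      rw [hTcl]; exact Submonoid.mem_top x
    induction hx using Submonoid.closure_induction with
    | mem t ht =>
      obtain ⟨i, rfl⟩ := hgsurj t ht
      by_cases h1 : g i = 1
      · rw [h1, hφS1]
        exact ⟨le_refl 0, fun h => absurd rfl h⟩
      · have hiI : i ∈ I := by rw [hI]; simp [h1]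
        exact ⟨le_of_lt (lt_of_lt_of_le hδpos (hδle i hiI)), fun _ => hδle i hiI⟩
    | one => exact ⟨le_of_eq hφS1.symm, fun h => absurd rfl h⟩
    | mul x y hx hy ihx ihy =>
      refine ⟨by rw [hφSmul]; linarith [ihx.1, ihy.1], fun hxy => ?_⟩
      rcases eq_or_ne x 1 with rfl | hx1
      · rw [one_mul] at hxy ⊢
        exact ihy.2 hxy
      · rw [hφSmul]
        linarith [ihx.2 hx1, ihy.1]
  -- atoms are in T
  have hdec : ∀ x : Associates H, x = 1 ∨ ∃ t ∈ T, t ≠ 1 ∧ ∃ y, x = t * y := by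
    intro x
    have hx : x ∈ Submonoid.closure (T : Set (Associates H)) := by
      rw [hTcl]; exact Submonoid.mem_top x
    induction hx using Submonoid.closure_induction with
    | mem t ht =>
      rcases eq_or_ne t 1 with rfl | h1
      · exact Or.inl rfl
      · exact Or.inr ⟨t, ht, h1, 1, (mul_one t).symm⟩
    | one => exact Or.inl rfl
    | mul x y hx hy ihx ihy =>
      rcases ihx with rfl | ⟨t, ht, h1, x', rfl⟩
      · rcases ihy with rfl | ⟨t, ht, h1, y', rfl⟩
        · exact Or.inl (one_mul 1)
        · exact Or.inr ⟨t, ht, h1, y', by rw [one_mul]⟩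
      · exact Or.inr ⟨t, ht, h1, x' * y, by rw [mul_assoc]⟩
  have hatomT : ∀ x : Associates H, Irreducible x → x ∈ T := by
    intro x hirr
    rcases hdec x with rfl | ⟨t, ht, h1, y, rfl⟩
    · exact absurd (isUnit_one) hirr.not_isUnit
    · rcases hirr.isUnit_or_isUnit rfl with h' | h'
      · exact absurd ((Associates.isUnit_iff_eq_one t).mp h') h1
      · rw [(Associates.isUnit_iff_eq_one y).mp h', mul_one]
        exact ht
  set Δ : ℝ := (T.image φS).max' (Finset.Nonempty.image ⟨1, Finset.mem_insert_self 1 T₀⟩ _) with hΔ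
  refine ⟨fun x => φS (Associates.mk x), δ₀, Δ, hδpos, ?_, ?_, ?_, ?_, ?_⟩
  · intro x y
    show φS (Associates.mk (x * y)) = φS (Associates.mk x) + φS (Associates.mk y)
    rw [← Associates.mk_mul_mk, hφSmul]
  · intro x hx
    show φS (Associates.mk x) = 0
    rw [Associates.mk_eq_one.mpr hx, hφS1]
  · intro x hx
    exact (hlow (Associates.mk x)).2 (fun h => hx (Associates.mk_eq_one.mp h))
  · intro x hx
    have : Associates.mk x ∈ T := hatomT _ (irreducible_mk_iff.mpr hx)
    exact Finset.le_max' _ _ (Finset.mem_image_of_mem _ this)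
  · exact Set.Finite.subset T.finite_toSet (fun x hx => hatomT x hx)

end Aux1

noncomputable def mnl (H : Type*) [CommMonoid H] (a : H) : ℕ := sInf (lengthSet H a)
noncomputable def Mxl (H : Type*) [CommMonoid H] (a : H) : ℕ := sSup (lengthSet H a)
noncomputable def muA (H : Type*) [CommMonoid H] (a : H) : ℝ :=
  sInf ((fun n : ℕ => (mnl H (a ^ n) : ℝ) / n) '' Set.Ici 1)
noncomputable def lamA (H : Type*) [CommMonoid H] (a : H) : ℝ :=
  -sInf ((fun n : ℕ => -(Mxl H (a ^ n) : ℝ) / n) '' Set.Ici 1)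
noncomputable def rhoBar (H : Type*) [CommMonoid H] (a : H) : ℝ := lamA H a / muA H a

section PartII

variable {H : Type*} [CancelCommMonoid H]

lemma lengthSet_of_not_isUnit {a : H} (ha : ¬ IsUnit a) :
    lengthSet H a = {k | ∃ f : Fin k → H, (∀ i, Irreducible (f i)) ∧ a = ∏ i, f i} := by
  rw [lengthSet, if_neg ha]

lemma lengthSet_of_isUnit {a : H} (ha : IsUnit a) : lengthSet H a = {0} := by
  rw [lengthSet, if_pos ha]

lemma elasticity_of_not_isUnit {a : H} (ha : ¬ IsUnit a) :
    elasticity H a = ((Mxl H a : ℕ) : ℝ) / ((mnl H a : ℕ) : ℝ) := by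
  rw [elasticity, if_neg ha]; rfl

lemma mem_lengthSet_pos {a : H} (ha : ¬ IsUnit a) {k : ℕ} (hk : k ∈ lengthSet H a) : 0 < k := by
  rw [lengthSet_of_not_isUnit ha] at hk
  obtain ⟨f, hf, hprod⟩ := hk
  rcases Nat.eq_zero_or_pos k with h | h
  · subst h
    simp only [Finset.univ_eq_empty, Finset.prod_empty] at hprod
    exact absurd (hprod ▸ isUnit_one) ha
  · exact h

lemma pow_not_isUnit {a : H} (ha : ¬ IsUnit a) {n : ℕ} (hn : n ≠ 0) : ¬ IsUnit (a ^ n) := by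
  intro h
  obtain ⟨m, rfl⟩ := Nat.exists_eq_succ_of_ne_zero hn
  rw [pow_succ] at h
  exact ha (isUnit_of_mul_isUnit_right h)

lemma mul_not_isUnit {a b : H} (ha : ¬ IsUnit a) : ¬ IsUnit (a * b) :=
  fun h => ha (isUnit_of_mul_isUnit_left h)

lemma add_mem_lengthSet {a b : H} (ha : ¬ IsUnit a) (hb : ¬ IsUnit b) {x y : ℕ}
    (hx : x ∈ lengthSet H a) (hy : y ∈ lengthSet H b) : x + y ∈ lengthSet H (a * b) := by
  rw [lengthSet_of_not_isUnit ha] at hx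
  rw [lengthSet_of_not_isUnit hb] at hy
  rw [lengthSet_of_not_isUnit (mul_not_isUnit ha)]
  obtain ⟨f, hf, hfa⟩ := hx
  obtain ⟨g, hg, hgb⟩ := hy
  refine ⟨Fin.append f g, ?_, ?_⟩
  · intro i
    refine Fin.addCases (fun i => ?_) (fun i => ?_) i
    · rw [Fin.append_left]; exact hf i
    · rw [Fin.append_right]; exact hg i
  · rw [Fin.prod_univ_add]
    rw [Finset.prod_congr rfl fun i _ => Fin.append_left f g i,
      Finset.prod_congr rfl fun i _ => Fin.append_right f g i]
    rw [← hfa, ← hgb]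

section Phi

variable (φ : H → ℝ) (δ₀ Δ : ℝ) (hδ : 0 < δ₀)
  (hmul : ∀ x y : H, φ (x * y) = φ x + φ y)
  (hunit : ∀ x : H, IsUnit x → φ x = 0)
  (hnon : ∀ x : H, ¬ IsUnit x → δ₀ ≤ φ x)
  (hatomle : ∀ x : H, Irreducible x → φ x ≤ Δ)

include hmul hunit in
lemma phi_prod : ∀ {ι : Type} (s : Finset ι) (f : ι → H),
    φ (∏ i ∈ s, f i) = ∑ i ∈ s, φ (f i) := by
  intro ι s f
  classical
  induction s using Finset.induction with
  | empty => simp [hunit 1 isUnit_one]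
  | insert _ _ hnotmem ih =>
    rw [Finset.prod_insert hnotmem, Finset.sum_insert hnotmem, hmul, ih]

include hmul hunit in
lemma phi_pow (a : H) (n : ℕ) : φ (a ^ n) = n * φ a := by
  induction n with
  | zero => simp [hunit 1 isUnit_one]
  | succ m ih => rw [pow_succ, hmul, ih]; push_cast; ring

include hδ hmul hunit hnon in
lemma phi_nonneg (a : H) : 0 ≤ φ a := by
  by_cases h : IsUnit a
  · exact le_of_eq (hunit a h).symm
  · exact le_trans hδ.le (hnon a h)

include hδ hmul hunit hnon in
lemma mem_lengthSet_le {a : H} (ha : ¬ IsUnit a) {k : ℕ} (hk : k ∈ lengthSet H a) :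
    (k : ℝ) * δ₀ ≤ φ a := by
  rw [lengthSet_of_not_isUnit ha] at hk
  obtain ⟨f, hf, rfl⟩ := hk
  rw [phi_prod φ hmul hunit]
  calc (k : ℝ) * δ₀ = ∑ _i : Fin k, δ₀ := by simp [mul_comm]
    _ ≤ ∑ i, φ (f i) := Finset.sum_le_sum fun i _ => hnon _ (hf i).not_isUnit

include hmul hunit hatomle in
lemma phi_le_of_mem {a : H} (ha : ¬ IsUnit a) {k : ℕ} (hk : k ∈ lengthSet H a) :
    φ a ≤ (k : ℝ) * Δ := by
  rw [lengthSet_of_not_isUnit ha] at hk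
  obtain ⟨f, hf, rfl⟩ := hk
  rw [phi_prod φ hmul hunit]
  calc ∑ i, φ (f i) ≤ ∑ _i : Fin k, Δ := Finset.sum_le_sum fun i _ => hatomle _ (hf i)
    _ = (k : ℝ) * Δ := by simp [mul_comm]

include hδ hmul hunit hnon in
lemma lengthSet_finite (a : H) : (lengthSet H a).Finite := by
  by_cases h : IsUnit a
  · rw [lengthSet_of_isUnit h]; exact Set.finite_singleton 0
  · apply Set.Finite.subset (Set.finite_Iic ⌈φ a / δ₀⌉₊)
    intro k hk
    have h1 : (k : ℝ) * δ₀ ≤ φ a := mem_lengthSet_le φ δ₀ hδ hmul hunit hnon h hk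
    have h2 : (k : ℝ) ≤ φ a / δ₀ := (le_div_iff₀ hδ).mpr h1
    have h3 : (k : ℝ) ≤ (⌈φ a / δ₀⌉₊ : ℝ) := le_trans h2 (Nat.le_ceil _)
    exact Set.mem_Iic.mpr (by exact_mod_cast h3)

include hδ hmul hunit hnon in
lemma exists_factorization : ∀ (n : ℕ) (a : H), ¬ IsUnit a → φ a ≤ n * δ₀ →
    ∃ (kk : ℕ) (f : Fin kk → H), 0 < kk ∧ (∀ i, Irreducible (f i)) ∧ a = ∏ i, f i := by
  intro n
  induction n with
  | zero =>
    intro a ha hle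
    exact absurd (lt_of_lt_of_le hδ (hnon a ha)) (by simpa using hle : φ a ≤ 0).not_gt
  | succ m ih =>
    intro a ha hle
    by_cases hirr : Irreducible a
    · exact ⟨1, fun _ => a, one_pos, fun _ => hirr, by rw [Fin.prod_univ_one]⟩
    · rw [irreducible_iff] at hirr
      push_neg at hirr
      obtain ⟨b, c, rfl, hb, hc⟩ := hirr ha
      have hφb : φ b ≤ m * δ₀ := by
        have := hnon c hc
        have := hmul b c
        push_cast at hle ⊢
        linarith
      have hφc : φ c ≤ m * δ₀ := by
        have := hnon b hb
        have := hmul b c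
        push_cast at hle ⊢
        linarith
      obtain ⟨k₁, f₁, hk₁, hf₁, he₁⟩ := ih b hb hφb
      obtain ⟨k₂, f₂, hk₂, hf₂, he₂⟩ := ih c hc hφc
      refine ⟨k₁ + k₂, Fin.append f₁ f₂, by omega, ?_, ?_⟩
      · intro i
        refine Fin.addCases (fun i => ?_) (fun i => ?_) i
        · rw [Fin.append_left]; exact hf₁ i
        · rw [Fin.append_right]; exact hf₂ i
      · rw [Fin.prod_univ_add]
        rw [Finset.prod_congr rfl fun i _ => Fin.append_left f₁ f₂ i,
          Finset.prod_congr rfl fun i _ => Fin.append_right f₁ f₂ i]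
        rw [← he₁, ← he₂]

include hδ hmul hunit hnon in
lemma lengthSet_nonempty {a : H} (ha : ¬ IsUnit a) : (lengthSet H a).Nonempty := by
  have hle : φ a ≤ ⌈φ a / δ₀⌉₊ * δ₀ := by
    have := Nat.le_ceil (φ a / δ₀)
    calc φ a = (φ a / δ₀) * δ₀ := by field_simp
      _ ≤ ⌈φ a / δ₀⌉₊ * δ₀ := by nlinarith [Nat.le_ceil (φ a / δ₀)]
  obtain ⟨kk, f, hkk, hf, he⟩ := exists_factorization φ δ₀ hδ hmul hunit hnon _ a ha hle
  exact ⟨kk, by rw [lengthSet_of_not_isUnit ha]; exact ⟨f, hf, he⟩⟩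

end Phi
end PartII

section Phi2
variable {H : Type*} [CancelCommMonoid H]
variable (φ : H → ℝ) (δ₀ Δ : ℝ) (hδ : 0 < δ₀) (hΔ : 0 < Δ)
  (hmul : ∀ x y : H, φ (x * y) = φ x + φ y)
  (hunit : ∀ x : H, IsUnit x → φ x = 0)
  (hnon : ∀ x : H, ¬ IsUnit x → δ₀ ≤ φ x)
  (hatomle : ∀ x : H, Irreducible x → φ x ≤ Δ)

lemma mnl_one : mnl H (1 : H) = 0 := by
  rw [mnl, lengthSet_of_isUnit isUnit_one, csInf_singleton]

lemma Mxl_one : Mxl H (1 : H) = 0 := by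
  rw [Mxl, lengthSet_of_isUnit isUnit_one, csSup_singleton]

include hδ hmul hunit hnon in
lemma mnl_mem {a : H} (ha : ¬ IsUnit a) : mnl H a ∈ lengthSet H a :=
  Nat.sInf_mem (lengthSet_nonempty φ δ₀ hδ hmul hunit hnon ha)

include hδ hmul hunit hnon in
lemma Mxl_mem {a : H} (ha : ¬ IsUnit a) : Mxl H a ∈ lengthSet H a :=
  Nat.sSup_mem (lengthSet_nonempty φ δ₀ hδ hmul hunit hnon ha)
    ((lengthSet_finite φ δ₀ hδ hmul hunit hnon a).bddAbove)

include hδ hΔ hmul hunit hnon hatomle in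
lemma asym (a : H) (ha : ¬ IsUnit a) :
    Tendsto (fun n : ℕ => (Mxl H (a ^ n) : ℝ) / n) atTop (𝓝 (lamA H a)) ∧
    Tendsto (fun n : ℕ => (mnl H (a ^ n) : ℝ) / n) atTop (𝓝 (muA H a)) ∧
    0 < muA H a ∧ 0 ≤ lamA H a ∧
    Tendsto (fun n : ℕ => elasticity H (a ^ n)) atTop (𝓝 (rhoBar H a)) := by
  have hm0 : mnl H (a ^ 0) = 0 := by rw [pow_zero, mnl_one]
  have hM0 : Mxl H (a ^ 0) = 0 := by rw [pow_zero, Mxl_one]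
  have hmem : ∀ n : ℕ, n ≠ 0 → mnl H (a ^ n) ∈ lengthSet H (a ^ n) :=
    fun n hn => mnl_mem φ δ₀ hδ hmul hunit hnon (pow_not_isUnit ha hn)
  have hMem : ∀ n : ℕ, n ≠ 0 → Mxl H (a ^ n) ∈ lengthSet H (a ^ n) :=
    fun n hn => Mxl_mem φ δ₀ hδ hmul hunit hnon (pow_not_isUnit ha hn)
  have hms : Subadditive (fun n => (mnl H (a ^ n) : ℝ)) := by
    intro m n
    rcases eq_or_ne m 0 with rfl | hm
    · simp [pow_zero, mnl_one]
    rcases eq_or_ne n 0 with rfl | hn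
    · simp [pow_zero, mnl_one]
    have h1 : mnl H (a ^ (m + n)) ≤ mnl H (a ^ m) + mnl H (a ^ n) := by
      apply Nat.sInf_le
      rw [pow_add]
      exact add_mem_lengthSet (pow_not_isUnit ha hm) (pow_not_isUnit ha hn)
        (hmem m hm) (hmem n hn)
    show (mnl H (a ^ (m + n)) : ℝ) ≤ (mnl H (a ^ m) : ℝ) + (mnl H (a ^ n) : ℝ)
    exact_mod_cast h1
  have hMsup : ∀ m n : ℕ, m ≠ 0 → n ≠ 0 →
      Mxl H (a ^ m) + Mxl H (a ^ n) ≤ Mxl H (a ^ (m + n)) := by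
    intro m n hm hn
    apply le_csSup (lengthSet_finite φ δ₀ hδ hmul hunit hnon _).bddAbove
    rw [pow_add]
    exact add_mem_lengthSet (pow_not_isUnit ha hm) (pow_not_isUnit ha hn)
      (hMem m hm) (hMem n hn)
  have hMs : Subadditive (fun n => -(Mxl H (a ^ n) : ℝ)) := by
    intro m n
    rcases eq_or_ne m 0 with rfl | hm
    · simp [pow_zero, Mxl_one]
    rcases eq_or_ne n 0 with rfl | hn
    · simp [pow_zero, Mxl_one]
    have h1 := hMsup m n hm hn
    have h2 : (Mxl H (a ^ m) : ℝ) + (Mxl H (a ^ n) : ℝ) ≤ (Mxl H (a ^ (m + n)) : ℝ) := by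
      exact_mod_cast h1
    show -(Mxl H (a ^ (m + n)) : ℝ) ≤ -(Mxl H (a ^ m) : ℝ) + -(Mxl H (a ^ n) : ℝ)
    linarith
  -- quantitative bounds
  have hMle : ∀ n : ℕ, n ≠ 0 → (Mxl H (a ^ n) : ℝ) * δ₀ ≤ n * φ a := by
    intro n hn
    have := mem_lengthSet_le φ δ₀ hδ hmul hunit hnon (pow_not_isUnit ha hn) (hMem n hn)
    rwa [phi_pow φ hmul hunit] at this
  have hmge : ∀ n : ℕ, n ≠ 0 → (n : ℝ) * φ a ≤ (mnl H (a ^ n) : ℝ) * Δ := by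
    intro n hn
    have := phi_le_of_mem φ Δ hmul hunit hatomle (pow_not_isUnit ha hn) (hmem n hn)
    rwa [phi_pow φ hmul hunit] at this
  have hφa : 0 < φ a := lt_of_lt_of_le hδ (hnon a ha)
  -- limits
  have hbddm : BddBelow (Set.range fun n : ℕ => (mnl H (a ^ n) : ℝ) / n) := by
    refine ⟨0, ?_⟩
    rintro x ⟨n, rfl⟩
    positivity
  have hmt : Tendsto (fun n : ℕ => (mnl H (a ^ n) : ℝ) / n) atTop (𝓝 (muA H a)) :=
    by have h := hms.tendsto_lim hbddm; rw [Subadditive.lim] at h; exact h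
  have hbddM : BddBelow (Set.range fun n : ℕ => -(Mxl H (a ^ n) : ℝ) / n) := by
    refine ⟨-(φ a / δ₀), ?_⟩
    rintro x ⟨n, rfl⟩
    show -(φ a / δ₀) ≤ -(Mxl H (a ^ n) : ℝ) / n
    rcases eq_or_ne n 0 with rfl | hn
    · rw [pow_zero, Mxl_one]
      simp
      positivity
    have h1 := hMle n hn
    have hn' : (0:ℝ) < n := by positivity
    rw [neg_div, le_neg, neg_neg]
    rw [div_le_div_iff₀ hn' hδ]
    linarith
  have hMt : Tendsto (fun n : ℕ => (Mxl H (a ^ n) : ℝ) / n) atTop (𝓝 (lamA H a)) := by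
    have h1 := (hMs.tendsto_lim hbddM).neg
    simp only [neg_div, neg_neg] at h1
    rw [Subadditive.lim] at h1
    exact h1
  have hμpos : 0 < muA H a := by
    have h1 : φ a / Δ ≤ muA H a := by
      apply ge_of_tendsto hmt
      filter_upwards [eventually_ne_atTop 0] with n hn
      have hn' : (0:ℝ) < n := by positivity
      rw [div_le_div_iff₀ hΔ hn']
      have := hmge n hn
      linarith
    exact lt_of_lt_of_le (div_pos hφa hΔ) h1
  have hlamnn : 0 ≤ lamA H a := by
    apply ge_of_tendsto hMt
    filter_upwards with n
    positivity
  refine ⟨hMt, hmt, hμpos, hlamnn, ?_⟩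
  have hev : (fun n : ℕ => (Mxl H (a ^ n) : ℝ) / n / ((mnl H (a ^ n) : ℝ) / n))
      =ᶠ[atTop] (fun n : ℕ => elasticity H (a ^ n)) := by
    filter_upwards [eventually_ne_atTop 0] with n hn
    rw [elasticity_of_not_isUnit (pow_not_isUnit ha hn)]
    rw [div_div_div_cancel_right₀ (by positivity : (n:ℝ) ≠ 0)]
  exact Tendsto.congr' hev (hMt.div hmt hμpos.ne')

include hδ hΔ hmul hunit hnon hatomle in
lemma mediant (a b : H) (ha : ¬ IsUnit a) (hb : ¬ IsUnit b) :
    min (rhoBar H a) (rhoBar H b) ≤ rhoBar H (a * b) := by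
  obtain ⟨hMa, hma, hμa, hlama, -⟩ := asym φ δ₀ Δ hδ hΔ hmul hunit hnon hatomle a ha
  obtain ⟨hMb, hmb, hμb, hlamb, -⟩ := asym φ δ₀ Δ hδ hΔ hmul hunit hnon hatomle b hb
  have hab : ¬ IsUnit (a * b) := mul_not_isUnit ha
  obtain ⟨hMab, hmab, hμab, hlamab, -⟩ := asym φ δ₀ Δ hδ hΔ hmul hunit hnon hatomle (a * b) hab
  have hmem : ∀ n : ℕ, n ≠ 0 → mnl H (a ^ n) ∈ lengthSet H (a ^ n) :=
    fun n hn => mnl_mem φ δ₀ hδ hmul hunit hnon (pow_not_isUnit ha hn)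
  have hlam : lamA H a + lamA H b ≤ lamA H (a * b) := by
    refine le_of_tendsto_of_tendsto (hMa.add hMb) hMab ?_
    filter_upwards [eventually_ne_atTop 0] with n hn
    have h1 : Mxl H (a ^ n) + Mxl H (b ^ n) ≤ Mxl H ((a * b) ^ n) := by
      apply le_csSup (lengthSet_finite φ δ₀ hδ hmul hunit hnon _).bddAbove
      rw [mul_pow]
      exact add_mem_lengthSet (pow_not_isUnit ha hn) (pow_not_isUnit hb hn)
        (Mxl_mem φ δ₀ hδ hmul hunit hnon (pow_not_isUnit ha hn))
        (Mxl_mem φ δ₀ hδ hmul hunit hnon (pow_not_isUnit hb hn))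
    have h2 : (Mxl H (a ^ n) : ℝ) + (Mxl H (b ^ n) : ℝ) ≤ (Mxl H ((a * b) ^ n) : ℝ) := by
      exact_mod_cast h1
    have hn' : (0:ℝ) < n := by positivity
    show (Mxl H (a ^ n) : ℝ) / n + (Mxl H (b ^ n) : ℝ) / n ≤ (Mxl H ((a * b) ^ n) : ℝ) / n
    rw [← add_div]
    gcongr
  have hμ : muA H (a * b) ≤ muA H a + muA H b := by
    refine le_of_tendsto_of_tendsto hmab (hma.add hmb) ?_
    filter_upwards [eventually_ne_atTop 0] with n hn
    have h1 : mnl H ((a * b) ^ n) ≤ mnl H (a ^ n) + mnl H (b ^ n) := by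
      apply Nat.sInf_le
      rw [mul_pow]
      exact add_mem_lengthSet (pow_not_isUnit ha hn) (pow_not_isUnit hb hn)
        (mnl_mem φ δ₀ hδ hmul hunit hnon (pow_not_isUnit ha hn))
        (mnl_mem φ δ₀ hδ hmul hunit hnon (pow_not_isUnit hb hn))
    have h2 : (mnl H ((a * b) ^ n) : ℝ) ≤ (mnl H (a ^ n) : ℝ) + (mnl H (b ^ n) : ℝ) := by
      exact_mod_cast h1
    have hn' : (0:ℝ) < n := by positivity
    show (mnl H ((a * b) ^ n) : ℝ) / n ≤ (mnl H (a ^ n) : ℝ) / n + (mnl H (b ^ n) : ℝ) / n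
    rw [← add_div]
    gcongr
  set t := min (rhoBar H a) (rhoBar H b) with htdef
  have ht0 : 0 ≤ t := le_min (div_nonneg hlama hμa.le) (div_nonneg hlamb hμb.le)
  have hta : t * muA H a ≤ lamA H a := by
    have h1 : t ≤ lamA H a / muA H a := min_le_left _ _
    exact (le_div_iff₀ hμa).mp h1
  have htb : t * muA H b ≤ lamA H b := by
    have h1 : t ≤ lamA H b / muA H b := min_le_right _ _
    exact (le_div_iff₀ hμb).mp h1
  show t ≤ rhoBar H (a * b)
  rw [rhoBar, le_div_iff₀ hμab]
  calc t * muA H (a * b) ≤ t * (muA H a + muA H b) := mul_le_mul_of_nonneg_left hμ ht0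
    _ = t * muA H a + t * muA H b := mul_add t _ _
    _ ≤ lamA H a + lamA H b := add_le_add hta htb
    _ ≤ lamA H (a * b) := hlam

end Phi2

section Inv
variable {H : Type*} [CancelCommMonoid H]

lemma mem_lengthSet_of_associated {a b : H} (h : Associated a b) {n : ℕ}
    (hn : n ∈ lengthSet H a) : n ∈ lengthSet H b := by
  classical
  by_cases hu : IsUnit a
  · have hub : IsUnit b := h.isUnit hu
    rw [lengthSet_of_isUnit hu] at hn
    rw [lengthSet_of_isUnit hub]
    exact hn
  · have hub : ¬ IsUnit b := fun hb => hu (h.symm.isUnit hb)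
    have hpos := mem_lengthSet_pos hu hn
    rw [lengthSet_of_not_isUnit hu] at hn
    rw [lengthSet_of_not_isUnit hub]
    obtain ⟨f, hf, rfl⟩ := hn
    obtain ⟨u, hu'⟩ := h
    set d : Fin n := ⟨0, hpos⟩
    refine ⟨Function.update f d (f d * u), ?_, ?_⟩
    · intro i
      rcases eq_or_ne i d with rfl | hi
      · rw [Function.update_self]
        exact Associated.irreducible ⟨u, rfl⟩ (hf d)
      · rw [Function.update_of_ne hi]
        exact hf i
    · rw [← hu']
      rw [Finset.prod_update_of_mem (Finset.mem_univ d)]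
      rw [← Finset.mul_prod_erase Finset.univ f (Finset.mem_univ d)]
      rw [Finset.erase_eq]
      exact mul_right_comm (f d) _ (u : H)

lemma lengthSet_congr_of_associated {a b : H} (h : Associated a b) :
    lengthSet H a = lengthSet H b :=
  Set.Subset.antisymm (fun _ hn => mem_lengthSet_of_associated h hn)
    (fun _ hn => mem_lengthSet_of_associated h.symm hn)

lemma rhoBar_congr_of_associated {a b : H} (h : Associated a b) :
    rhoBar H a = rhoBar H b := by
  have hls : ∀ n : ℕ, lengthSet H (a ^ n) = lengthSet H (b ^ n) :=
    fun n => lengthSet_congr_of_associated (h.pow_pow)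
  have h1 : (fun n : ℕ => (mnl H (a ^ n) : ℝ) / n) = (fun n : ℕ => (mnl H (b ^ n) : ℝ) / n) :=
    funext fun n => by rw [mnl, mnl, hls n]
  have h2 : (fun n : ℕ => -(Mxl H (a ^ n) : ℝ) / n) = (fun n : ℕ => -(Mxl H (b ^ n) : ℝ) / n) :=
    funext fun n => by rw [Mxl, Mxl, hls n]
  rw [rhoBar, rhoBar, lamA, lamA, muA, muA, h1, h2]

end Inv

section Phi3
variable {H : Type*} [CancelCommMonoid H]
variable (φ : H → ℝ) (δ₀ Δ : ℝ) (hδ : 0 < δ₀) (hΔ : 0 < Δ)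
  (hmul : ∀ x y : H, φ (x * y) = φ x + φ y)
  (hunit : ∀ x : H, IsUnit x → φ x = 0)
  (hnon : ∀ x : H, ¬ IsUnit x → δ₀ ≤ φ x)
  (hatomle : ∀ x : H, Irreducible x → φ x ≤ Δ)

include hδ hΔ hmul hunit hnon hatomle in
lemma prod_rhoBar : ∀ (kk : ℕ), 0 < kk → ∀ f : Fin kk → H, (∀ i, Irreducible (f i)) →
    ¬ IsUnit (∏ i, f i) ∧ ∃ i, rhoBar H (f i) ≤ rhoBar H (∏ i, f i) := by
  intro kk
  induction kk with
  | zero => intro h; omega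
  | succ m ih =>
    intro _ f hf
    rcases Nat.eq_zero_or_pos m with rfl | hm
    · constructor
      · rw [Fin.prod_univ_one]
        exact (hf 0).not_isUnit
      · exact ⟨0, by rw [Fin.prod_univ_one]⟩
    · obtain ⟨hPnu, i, hi⟩ := ih hm (fun i => f i.castSucc) (fun i => hf _)
      have hprod : (∏ i : Fin (m + 1), f i) = (∏ i : Fin m, f i.castSucc) * f (Fin.last m) :=
        Fin.prod_univ_castSucc f
      constructor
      · rw [hprod]
        exact mul_not_isUnit hPnu
      · have hmed := mediant φ δ₀ Δ hδ hΔ hmul hunit hnon hatomle _ _ hPnu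
          (hf (Fin.last m)).not_isUnit
        rw [← hprod] at hmed
        rcases le_total (rhoBar H (∏ i : Fin m, f i.castSucc)) (rhoBar H (f (Fin.last m)))
          with hle | hle
        · rw [min_eq_left hle] at hmed
          exact ⟨i.castSucc, le_trans hi hmed⟩
        · rw [min_eq_right hle] at hmed
          exact ⟨Fin.last m, hmed⟩

include hδ hΔ hmul hunit hnon hatomle in
lemma ge_atom (a : H) (ha : ¬ IsUnit a) :
    ∃ u : H, Irreducible u ∧ rhoBar H u ≤ rhoBar H a := by
  obtain ⟨kk, hkmem⟩ := lengthSet_nonempty φ δ₀ hδ hmul hunit hnon ha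
  have hkk := mem_lengthSet_pos ha hkmem
  rw [lengthSet_of_not_isUnit ha] at hkmem
  obtain ⟨f, hf, rfl⟩ := hkmem
  obtain ⟨-, i, hi⟩ := prod_rhoBar φ δ₀ Δ hδ hΔ hmul hunit hnon hatomle kk hkk f hf
  exact ⟨f i, hf i, hi⟩

end Phi3


set_option maxHeartbeats 1000000 in
/-- If `H_red = H/H^×` is finitely generated and `H ≠ H^×`, then there
is an atom `b` with `lim ρ(bⁿ) = inf R̄(H)`; in particular `inf R̄(H)` is the minimum of
the asymptotic elasticities of atoms, and the infimum of `R̄(H)` is attained. -/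
theorem statement10 (H : Type*) [CancelCommMonoid H]
    (hfg : Monoid.FG (Associates H)) (hne : ∃ a : H, ¬ IsUnit a) :
    ∃ b : H, Irreducible b ∧
      Tendsto (fun n : ℕ => ((elasticity H (b ^ n) : ℝ) : EReal)) atTop
        (nhds (sInf (asympSet H))) ∧
      sInf (asympSet H) ∈ asympSet H ∧
      sInf (asympSet H) =
        sInf {r : EReal | ∃ u : H, Irreducible u ∧
          Tendsto (fun n : ℕ => ((elasticity H (u ^ n) : ℝ) : EReal)) atTop (nhds r)} := by
  classical
  obtain ⟨φ, δ₀, Δ, hδ, hmul, hunit, hnon, hatomle, hfin⟩ := exists_phi hfg hne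
  obtain ⟨a₀, ha₀⟩ := hne
  obtain ⟨u₀, hu₀irr⟩ : ∃ u : H, Irreducible u := by
    obtain ⟨kk, hkmem⟩ := lengthSet_nonempty φ δ₀ hδ hmul hunit hnon ha₀
    have hkk := mem_lengthSet_pos ha₀ hkmem
    rw [lengthSet_of_not_isUnit ha₀] at hkmem
    obtain ⟨f, hf, -⟩ := hkmem
    exact ⟨f ⟨0, hkk⟩, hf _⟩
  have hΔ : 0 < Δ :=
    lt_of_lt_of_le (lt_of_lt_of_le hδ (hnon u₀ hu₀irr.not_isUnit)) (hatomle u₀ hu₀irr)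
  set lift : Associates H → H := fun u => (Associates.mk_surjective u).choose with hliftdef
  have hlift : ∀ u, Associates.mk (lift u) = u :=
    fun u => (Associates.mk_surjective u).choose_spec
  have hAne : {u : Associates H | Irreducible u}.Nonempty :=
    ⟨Associates.mk u₀, irreducible_mk_iff.mpr hu₀irr⟩
  obtain ⟨v, hvmem, hvmin⟩ := Set.exists_min_image _ (fun u => rhoBar H (lift u)) hfin hAne
  set b := lift v with hbdef
  have hbirr : Irreducible b := irreducible_mk_iff.mp (by rw [hlift v]; exact hvmem)
  have hbnu : ¬ IsUnit b := hbirr.not_isUnit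
  have hbmin : ∀ a : H, ¬ IsUnit a → rhoBar H b ≤ rhoBar H a := by
    intro a ha
    obtain ⟨u, huirr, hule⟩ := ge_atom φ δ₀ Δ hδ hΔ hmul hunit hnon hatomle a ha
    have h1 : Associates.mk u ∈ {u : Associates H | Irreducible u} :=
      irreducible_mk_iff.mpr huirr
    have h2 : rhoBar H (lift (Associates.mk u)) = rhoBar H u :=
      rhoBar_congr_of_associated
        (Associates.mk_eq_mk_iff_associated.mp (hlift (Associates.mk u)))
    calc rhoBar H b ≤ rhoBar H (lift (Associates.mk u)) := hvmin _ h1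
      _ = rhoBar H u := h2
      _ ≤ rhoBar H a := hule
  have hasym : ∀ (a : H), ¬ IsUnit a →
      Tendsto (fun n : ℕ => elasticity H (a ^ n)) atTop (𝓝 (rhoBar H a)) :=
    fun a ha => (asym φ δ₀ Δ hδ hΔ hmul hunit hnon hatomle a ha).2.2.2.2
  have htb : Tendsto (fun n : ℕ => ((elasticity H (b ^ n) : ℝ) : EReal)) atTop
      (𝓝 ((rhoBar H b : ℝ) : EReal)) := EReal.tendsto_coe.mpr (hasym b hbnu)
  have hlimit : ∀ (a : H) (r : EReal), ¬ IsUnit a →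
      Tendsto (fun n : ℕ => ((elasticity H (a ^ n) : ℝ) : EReal)) atTop (𝓝 r) →
      r = ((rhoBar H a : ℝ) : EReal) :=
    fun a r ha hta => tendsto_nhds_unique hta (EReal.tendsto_coe.mpr (hasym a ha))
  have hmemA : ((rhoBar H b : ℝ) : EReal) ∈ asympSet H := ⟨b, hbnu, htb⟩
  have hsinf : sInf (asympSet H) = ((rhoBar H b : ℝ) : EReal) := by
    apply le_antisymm (sInf_le hmemA)
    apply le_sInf
    rintro r ⟨a, ha, hta⟩
    rw [hlimit a r ha hta]
    exact EReal.coe_le_coe_iff.mpr (hbmin a ha)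
  refine ⟨b, hbirr, ?_, ?_, ?_⟩
  · rw [hsinf]; exact htb
  · rw [hsinf]; exact hmemA
  · rw [hsinf]
    apply le_antisymm
    · apply le_sInf
      rintro r ⟨u, huirr, htu⟩
      rw [hlimit u r huirr.not_isUnit htu]
      exact EReal.coe_le_coe_iff.mpr (hbmin u huirr.not_isUnit)
    · exact sInf_le ⟨b, hbirr, htb⟩
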